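/- arXiv:2409.10029 — 3 statements merged into one kernel-verified Lean document; each statement's English description precedes it below -/
import Mathlib

section
/- Let X be a nonempty set, k a field of characteristic 0, and N : X × X → ℕ. For all x,y ∈ X, n,m ∈ ℤ, and every L ∈ ℕ with L ≥ N(y,x), the polynomial f^{0,1}_{x,y}(n,m;L) = Σ_{t=0}^{L} (−1)^t C(L,t) x^(0)(n−t) y^(1)(m+t) belongs to the ideal I(N). -/
noncomputable section

/-- The polynomial algebra `F = k[B^(ω)]` in the variables `a^(p)(n)`
(`a ∈ X`, `p ∈ ℕ`, `n ∈ ℤ`), encoded as triples `(a, p, n)`. -/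
abbrev FreeDiffAlg (k X : Type*) [CommRing k] : Type _ :=
  MvPolynomial (X × ℕ × ℤ) k

/-- The derivation `d : F → F` determined by `d(a^(p)(n)) = a^(p+1)(n)`. -/
def derD (k X : Type*) [CommRing k] :
    Derivation k (FreeDiffAlg k X) (FreeDiffAlg k X) :=
  MvPolynomial.mkDerivation k fun v : X × ℕ × ℤ =>
    MvPolynomial.X (v.1, v.2.1 + 1, v.2.2)

/-- The weight of the variable `a^(p)(n)` is `p - 1`. -/
def wtVar {X : Type*} (v : X × ℕ × ℤ) : ℤ := (v.2.1 : ℤ) - 1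

/-- `F_w`: the `k`-span of the monomials of weight `w` (the weight of a monomial
is the sum of the weights of its variables, counted with multiplicity). -/
def Fwt (k X : Type*) [CommRing k] (w : ℤ) : Submodule k (FreeDiffAlg k X) :=
  MvPolynomial.weightedHomogeneousSubmodule k (wtVar (X := X)) w

/-- The weight of a monomial (given by its exponent function). -/
def wtMon {X : Type*} (s : (X × ℕ × ℤ) →₀ ℕ) : ℤ :=
  s.sum fun v c => (c : ℤ) * wtVar v

/-- `f^{p,q}_{a,b}(n, m; L) = Σ_{t=0}^{L} (−1)^t C(L,t) a^(p)(n−t) b^(q)(m+t)`. -/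
def fpq (k : Type*) {X : Type*} [CommRing k] (a b : X) (p q : ℕ)
    (n m : ℤ) (L : ℕ) : FreeDiffAlg k X :=
  ∑ t ∈ Finset.range (L + 1),
    ((-1 : k) ^ t * (L.choose t : k)) •
      (MvPolynomial.X (a, p, n - (t : ℤ)) * MvPolynomial.X (b, q, m + (t : ℤ)))

/-- The ideal `I(N)` generated by all `d^l(f_{a,b}(n,m))`,
where `f_{a,b}(n,m) = f^{1,0}_{a,b}(n, m; N(a,b))`. -/
def idealI (k : Type*) {X : Type*} [CommRing k] (N : X × X → ℕ) :
    Ideal (FreeDiffAlg k X) :=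
  Ideal.span { g | ∃ (a b : X) (n m : ℤ) (l : ℕ),
    g = (⇑(derD k X))^[l] (fpq k a b 1 0 n m (N (a, b))) }

/-- The ideal `K(N̄)` generated by all `d^l(f^{p,q}_{a,b}(n, m; N̄((a,p),(b,q))))`. -/
def idealK (k : Type*) {X : Type*} [CommRing k]
    (Nbar : (X × ℕ) × (X × ℕ) → ℕ) : Ideal (FreeDiffAlg k X) :=
  Ideal.span { g | ∃ (a b : X) (p q l : ℕ) (n m : ℤ),
    g = (⇑(derD k X))^[l] (fpq k a b p q n m (Nbar ((a, p), (b, q)))) }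

lemma fpq_succ (k : Type*) {X : Type*} [CommRing k] (a b : X) (p q : ℕ)
    (n m : ℤ) (L : ℕ) :
    fpq k a b p q n m (L+1) = fpq k a b p q n m L - fpq k a b p q (n-1) (m+1) L := by
  set G : ℕ → FreeDiffAlg k X := fun t =>
    MvPolynomial.X (a, p, n - (t : ℤ)) * MvPolynomial.X (b, q, m + (t : ℤ)) with hG
  have h1 : fpq k a b p q (n-1) (m+1) L
      = ∑ t ∈ Finset.range (L+1), ((-1:k)^t * (L.choose t : k)) • G (t+1) := by
    unfold fpq
    refine Finset.sum_congr rfl fun t _ => ?_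
    simp only [hG]
    congr 2 <;> push_cast <;> ring
  have h2 : fpq k a b p q n m (L+1)
      = (∑ t ∈ Finset.range (L+1), ((-1:k)^(t+1) * ((L+1).choose (t+1):k)) • G (t+1))
        + ((-1:k)^0 * (((L+1).choose 0 : k))) • G 0 := by
    unfold fpq
    rw [Finset.sum_range_succ']
  rw [h2, h1]
  have h3 : ∀ t : ℕ, ((-1:k)^(t+1) * ((L+1).choose (t+1):k)) • G (t+1)
      = ((-1:k)^(t+1) * (L.choose (t+1):k)) • G (t+1)
        - ((-1:k)^t * (L.choose t : k)) • G (t+1) := by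
    intro t
    rw [Nat.choose_succ_succ]
    push_cast
    rw [← sub_smul]
    congr 1
    ring
  rw [Finset.sum_congr rfl fun t _ => h3 t, Finset.sum_sub_distrib]
  have h4 : (∑ t ∈ Finset.range (L+1), ((-1:k)^(t+1) * (L.choose (t+1):k)) • G (t+1))
      + ((-1:k)^0 * (((L+1).choose 0 : k))) • G 0
      = fpq k a b p q n m L := by
    have := (Finset.sum_range_succ' (fun t => ((-1:k)^t * (L.choose t : k)) • G t) (L+1)).symm
    simp only [Nat.choose_zero_right, Nat.cast_one, pow_zero] at this ⊢
    rw [this, Finset.sum_range_succ, Nat.choose_succ_self]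
    unfold fpq
    simp [hG]
  linear_combination h4

lemma fpq_gen_mem (k : Type*) {X : Type*} [CommRing k] (N : X × X → ℕ)
    (a b : X) (n m : ℤ) : fpq k a b 1 0 n m (N (a, b)) ∈ idealI k N :=
  Ideal.subset_span ⟨a, b, n, m, 0, by simp⟩

lemma fpq_one_zero_mem (k : Type*) {X : Type*} [CommRing k] (N : X × X → ℕ)
    (a b : X) (L : ℕ) (hL : N (a, b) ≤ L) :
    ∀ n m : ℤ, fpq k a b 1 0 n m L ∈ idealI k N := by
  induction L with
  | zero =>
    intro n m
    have h0 : N (a, b) = 0 := Nat.le_zero.mp hL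
    have := fpq_gen_mem k N a b n m
    rwa [h0] at this
  | succ L ih =>
    intro n m
    rcases eq_or_lt_of_le hL with h | h
    · rw [← h]
      exact fpq_gen_mem k N a b n m
    · have hL' : N (a, b) ≤ L := Nat.lt_succ_iff.mp h
      rw [fpq_succ]
      exact sub_mem (ih hL' n m) (ih hL' (n-1) (m+1))

lemma fpq_reflect (k : Type*) {X : Type*} [CommRing k] (a b : X) (p q : ℕ)
    (n m : ℤ) (L : ℕ) :
    fpq k a b p q n m L = ((-1:k)^L) • fpq k b a q p (m + L) (n - L) L := by
  unfold fpq
  rw [Finset.smul_sum, ← Finset.sum_range_reflect]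
  refine Finset.sum_congr rfl fun t ht => ?_
  have htL : t ≤ L := Finset.mem_range_succ_iff.mp ht
  have hc : (L + 1 - 1 - t) = L - t := by omega
  rw [hc, smul_smul, Nat.choose_symm htL]
  have hcast : ((L - t : ℕ) : ℤ) = (L : ℤ) - t := by
    push_cast [Nat.cast_sub htL]; ring
  have e1 : n - ((L - t : ℕ) : ℤ) = n - L + t := by rw [hcast]; ring
  have e2 : m + ((L - t : ℕ) : ℤ) = m + L - t := by rw [hcast]; ring
  rw [e1, e2, mul_comm (MvPolynomial.X (a, p, n - (L:ℤ) + (t:ℤ)))]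
  congr 1
  have hs : (-1:k)^(L-t) * (-1:k)^t = (-1:k)^L := by
    rw [← pow_add, Nat.sub_add_cancel htL]
  have h2 : ((-1:k)^t) * ((-1:k)^t) = 1 := by
    rw [← pow_add, ← two_mul, pow_mul]; norm_num
  have h3 : (-1:k)^(L-t) = (-1:k)^L * (-1:k)^t := by
    calc (-1:k)^(L-t) = (-1:k)^(L-t) * ((-1:k)^t * (-1:k)^t) := by rw [h2, mul_one]
      _ = (-1:k)^L * (-1:k)^t := by rw [← mul_assoc, hs]
  rw [h3]; ring

/-- `f^{0,1}_{x,y}(n, m; L) ∈ I(N)` whenever `L ≥ N(y,x)`. -/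
theorem fpq_zero_one_mem_idealI
    (k X : Type*) [Field k] [CharZero k] [Nonempty X]
    (N : X × X → ℕ) (x y : X) (n m : ℤ) (L : ℕ) (hL : N (y, x) ≤ L) :
    fpq k x y 0 1 n m L ∈ idealI k N := by
  rw [fpq_reflect, MvPolynomial.smul_eq_C_mul]
  exact Ideal.mul_mem_left _ _ (fpq_one_zero_mem k N y x L hL (m + L) (n - L))

end
end

section
/- Let X be a nonempty set, k a field of characteristic 0, and N : X × X → ℕ. For all x,y ∈ X, n,m ∈ ℤ, and every L ∈ ℕ with L ≥ N(x,y), the polynomial f^{1,0}_{x,y}(n,m;L) = Σ_{t=0}^{L} (−1)^t C(L,t) x^(1)(n−t) y^(0)(m+t) belongs to the ideal I(N). -/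
noncomputable section

lemma fpq_succ_eq (k : Type*) {X : Type*} [CommRing k] (a b : X) (p q : ℕ)
    (n m : ℤ) (L : ℕ) :
    fpq k a b p q n m (L + 1)
      = fpq k a b p q n m L - fpq k a b p q (n - 1) (m + 1) L := by
  have hext : fpq k a b p q n m L
      = ∑ t ∈ Finset.range (L + 1 + 1),
        ((-1 : k) ^ t * (L.choose t : k)) •
          (MvPolynomial.X (a, p, n - (t : ℤ)) * MvPolynomial.X (b, q, m + (t : ℤ))) := by
    rw [Finset.sum_range_succ, Nat.choose_succ_self]
    simp [fpq]
  rw [eq_sub_iff_add_eq, hext]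
  unfold fpq
  rw [Finset.sum_range_succ' (n := L + 1)
      (f := fun t => ((-1 : k) ^ t * ((L + 1).choose t : k)) •
        (MvPolynomial.X (a, p, n - (t : ℤ)) * MvPolynomial.X (b, q, m + (t : ℤ)))),
    Finset.sum_range_succ' (n := L + 1)
      (f := fun t => ((-1 : k) ^ t * (L.choose t : k)) •
        (MvPolynomial.X (a, p, n - (t : ℤ)) * MvPolynomial.X (b, q, m + (t : ℤ))))]
  have h0 : ((L + 1).choose 0 : k) = (L.choose 0 : k) := by simp
  rw [add_right_comm, ← Finset.sum_add_distrib]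
  congr 1
  · apply Finset.sum_congr rfl
    intro i _
    have hM : (MvPolynomial.X (a, p, n - 1 - (i : ℤ)) *
        MvPolynomial.X (b, q, m + 1 + (i : ℤ)) : FreeDiffAlg k X)
        = MvPolynomial.X (a, p, n - ((i : ℤ) + 1)) *
          MvPolynomial.X (b, q, m + ((i : ℤ) + 1)) := by
      ring_nf
    push_cast [Nat.choose_succ_succ' L i]
    rw [hM, ← add_smul]
    congr 1
    ring
  · simp

/-- `f^{1,0}_{x,y}(n, m; L) ∈ I(N)` whenever `L ≥ N(x,y)`. -/
theorem fpq_one_zero_mem_idealI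
    (k X : Type*) [Field k] [CharZero k] [Nonempty X]
    (N : X × X → ℕ) (x y : X) (n m : ℤ) (L : ℕ) (hL : N (x, y) ≤ L) :
    fpq k x y 1 0 n m L ∈ idealI k N := by
  induction L, hL using Nat.le_induction generalizing n m with
  | base =>
    exact Ideal.subset_span ⟨x, y, n, m, 0, by simp⟩
  | succ L hNL ih =>
    rw [fpq_succ_eq]
    exact sub_mem (ih n m) (ih (n - 1) (m + 1))

end
end

section
/- Let X be a nonempty set, k a field of characteristic 0, N : X × X → ℕ, and M ∈ ℕ with N(a,b) ≤ M for all a,b ∈ X. Then for all a,x,y ∈ X, every r ≥ 2, and all k₀,n,m ∈ ℤ, the product a^(r)(k₀) · f^{0,0}_{x,y}(n,m; 3M) belongs to the ideal I(N). -/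
noncomputable section

namespace Work
open MvPolynomial Finset
variable {k X : Type*} [CommRing k]

lemma derD_X' (a : X) (p : ℕ) (n : ℤ) :
    derD k X (MvPolynomial.X (a, p, n)) = MvPolynomial.X (a, p + 1, n) :=
  MvPolynomial.mkDerivation_X _ _ _

lemma d_fpq (a b : X) (p q : ℕ) (n m : ℤ) (L : ℕ) :
    derD k X (fpq k a b p q n m L) =
      fpq k a b (p + 1) q n m L + fpq k a b p (q + 1) n m L := by
  unfold fpq
  rw [map_sum, ← Finset.sum_add_distrib]
  refine Finset.sum_congr rfl fun t _ => ?_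
  rw [Derivation.map_smul, Derivation.leibniz, derD_X', derD_X']
  simp only [smul_eq_mul, smul_add]
  rw [add_comm]
  congr 1
  rw [mul_comm (MvPolynomial.X (b, q, m + (t:ℤ)))]

/-- generators are in the ideal -/
lemma gen_mem (N : X × X → ℕ) (a b : X) (n m : ℤ) (l : ℕ) :
    (⇑(derD k X))^[l] (fpq k a b 1 0 n m (N (a, b))) ∈ idealI k N :=
  Ideal.subset_span ⟨a, b, n, m, l, rfl⟩

/-- the ideal is stable under `d` -/
lemma derD_mem (N : X × X → ℕ) {u : FreeDiffAlg k X} (hu : u ∈ idealI k N) :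
    derD k X u ∈ idealI k N := by
  refine Submodule.span_induction (p := fun x _ => derD k X x ∈ idealI k N)
    ?_ ?_ ?_ ?_ hu
  · rintro g ⟨a, b, n, m, l, rfl⟩
    rw [← Function.iterate_succ_apply' (⇑(derD k X))]
    exact gen_mem N a b n m (l + 1)
  · simp
  · intro u v _ _ hu hv
    rw [map_add]; exact add_mem hu hv
  · intro c u hu hdu
    rw [smul_eq_mul, Derivation.leibniz, smul_eq_mul, smul_eq_mul]
    exact add_mem (Ideal.mul_mem_left _ _ hdu) (Ideal.mul_mem_right _ _ hu)


/-- generic Pascal recursion for alternating binomial sums -/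
lemma genPascal {R M : Type*} [CommRing R] [AddCommGroup M] [Module R M]
    (φ : ℕ → M) (e : ℕ) :
    ∑ t ∈ Finset.range (e + 2), ((-1 : R) ^ t * ((e + 1).choose t : R)) • φ t
      = ∑ t ∈ Finset.range (e + 1), ((-1 : R) ^ t * (e.choose t : R)) • φ t
        - ∑ t ∈ Finset.range (e + 1), ((-1 : R) ^ t * (e.choose t : R)) • φ (t + 1) := by
  rw [Finset.sum_range_succ'
    (fun t => ((-1 : R) ^ t * ((e + 1).choose t : R)) • φ t) (e + 1)]
  have h1 : ∀ t ∈ Finset.range (e + 1),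
      ((-1 : R) ^ (t + 1) * ((e + 1).choose (t + 1) : R)) • φ (t + 1)
        = ((-1 : R) ^ (t + 1) * (e.choose (t + 1) : R)) • φ (t + 1)
          - ((-1 : R) ^ t * (e.choose t : R)) • φ (t + 1) := by
    intro t _
    rw [eq_sub_iff_add_eq, ← add_smul]
    congr 1
    rw [Nat.choose_succ_succ']
    push_cast
    ring
  rw [Finset.sum_congr rfl h1, Finset.sum_sub_distrib]
  have h2 : ∑ t ∈ Finset.range (e + 1),
      ((-1 : R) ^ (t + 1) * (e.choose (t + 1) : R)) • φ (t + 1)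
        + ((-1 : R) ^ 0 * ((e + 1).choose 0 : R)) • φ 0
      = ∑ t ∈ Finset.range (e + 1), ((-1 : R) ^ t * (e.choose t : R)) • φ t := by
    rw [Finset.sum_range_succ' (fun t => ((-1 : R) ^ t * (e.choose t : R)) • φ t) e]
    congr 1
    · rw [Finset.sum_range_succ]
      simp
    · simp
  rw [sub_add_eq_add_sub, h2]

/-- Pascal recursion for `fpq` -/
lemma fpq_pascal (a b : X) (p q : ℕ) (n m : ℤ) (L : ℕ) :
    fpq k a b p q n m (L + 1)
      = fpq k a b p q n m L - fpq k a b p q (n - 1) (m + 1) L := by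
  have h := genPascal (R := k) (M := FreeDiffAlg k X)
    (φ := fun t => MvPolynomial.X (a, p, n - (t : ℤ)) * MvPolynomial.X (b, q, m + (t : ℤ))) L
  unfold fpq
  rw [h]
  congr 1
  refine Finset.sum_congr rfl fun t _ => ?_
  push_cast
  rw [show n - ((t : ℤ) + 1) = n - 1 - t by ring, show m + ((t : ℤ) + 1) = m + 1 + t by ring]

/-- monotonicity of membership in `L`, for multiples of `fpq` -/
lemma fpq_mul_mem_mono (J : Ideal (FreeDiffAlg k X)) (c : FreeDiffAlg k X)
    (a b : X) (p q : ℕ) {L : ℕ}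
    (h : ∀ n m : ℤ, c * fpq k a b p q n m L ∈ J) :
    ∀ L' : ℕ, L ≤ L' → ∀ n m : ℤ, c * fpq k a b p q n m L' ∈ J := by
  intro L' hL'
  induction L' , hL' using Nat.le_induction with
  | base => exact h
  | succ L' hLL ih =>
    intro n m
    rw [fpq_pascal, mul_sub]
    exact sub_mem (ih n m) (ih (n - 1) (m + 1))

/-- symmetry of `fpq` -/
lemma fpq_swap (a b : X) (p q : ℕ) (n m : ℤ) (L : ℕ) :
    fpq k a b p q n m L
      = ((-1 : k) ^ L) • fpq k b a q p (m + L) (n - L) L := by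
  unfold fpq
  rw [Finset.smul_sum, ← Finset.sum_range_reflect]
  refine Finset.sum_congr rfl fun t ht => ?_
  rw [Finset.mem_range] at ht
  have htL : t ≤ L := Nat.lt_succ_iff.mp ht
  simp only [Nat.add_sub_cancel]
  have hc : ((L - t : ℕ) : ℤ) = (L : ℤ) - t := by omega
  rw [hc, smul_smul, Nat.choose_symm htL,
    show n - ((L : ℤ) - t) = n - L + t from by ring,
    show m + ((L : ℤ) - t) = m + L - t from by ring,
    mul_comm (MvPolynomial.X (a, p, n - L + t))]
  congr 1
  have hpow : ((-1 : k)) ^ (L - t) = (-1) ^ L * (-1) ^ t := by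
    have h1 : (-1 : k) ^ L = (-1) ^ (L - t) * (-1) ^ t := by
      rw [← pow_add]; congr 1; omega
    have h2 : ((-1 : k) ^ t) * ((-1) ^ t) = 1 := by
      rw [← pow_add, ← two_mul, pow_mul]; norm_num
    rw [h1, mul_assoc, h2, mul_one]
  rw [hpow]; ring


/-! ### Shift-operator calculus on families indexed by `ℤ³` -/

variable (k X) in
/-- substitution operator on families -/
def shiftOp (σ : ℤ × ℤ × ℤ → ℤ × ℤ × ℤ) :
    Module.End k ((ℤ × ℤ × ℤ) → FreeDiffAlg k X) where
  toFun g := g ∘ σ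
  map_add' _ _ := rfl
  map_smul' _ _ := rfl

lemma shiftOp_apply (σ : ℤ × ℤ × ℤ → ℤ × ℤ × ℤ) (g) (v) :
    shiftOp k X σ g v = g (σ v) := rfl

lemma shiftOp_mul (σ τ : ℤ × ℤ × ℤ → ℤ × ℤ × ℤ) :
    shiftOp k X σ * shiftOp k X τ = shiftOp k X (τ ∘ σ) := rfl

lemma shiftOp_pow (σ : ℤ × ℤ × ℤ → ℤ × ℤ × ℤ) (e : ℕ) :
    (shiftOp k X σ) ^ e = shiftOp k X (σ^[e]) := by
  induction e with
  | zero => rfl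
  | succ e ih =>
    rw [pow_succ, ih, shiftOp_mul]
    congr 1
    exact (Function.iterate_succ' σ e).symm

/-- binomial expansion of powers of `1 - shiftOp σ` -/
lemma one_sub_shiftOp_pow_apply (σ : ℤ × ℤ × ℤ → ℤ × ℤ × ℤ) (e : ℕ)
    (g : (ℤ × ℤ × ℤ) → FreeDiffAlg k X) (v : ℤ × ℤ × ℤ) :
    ((1 - shiftOp k X σ) ^ e) g v
      = ∑ t ∈ Finset.range (e + 1),
          ((-1 : k) ^ t * (e.choose t : k)) • g (σ^[t] v) := by
  induction e generalizing g with
  | zero => simp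
  | succ e ih =>
    rw [pow_succ]
    have h0 : ((1 - shiftOp k X σ) ^ e * (1 - shiftOp k X σ)) g v
        = ((1 - shiftOp k X σ) ^ e) ((1 - shiftOp k X σ) g) v := rfl
    rw [h0, ih]
    have h1 : ∀ t : ℕ, ((1 - shiftOp k X σ) g) (σ^[t] v)
        = g (σ^[t] v) - g (σ^[t + 1] v) := by
      intro t
      have : σ (σ^[t] v) = σ^[t + 1] v := (Function.iterate_succ_apply' σ t v).symm
      simp [shiftOp_apply, LinearMap.sub_apply, this]
    simp_rw [h1, smul_sub]
    rw [Finset.sum_sub_distrib]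
    exact (genPascal (R := k) (fun t => g (σ^[t] v)) e).symm

/-- if all members of a family lie in an ideal, so do those of its image
under `(1 - shiftOp σ)^e` -/
lemma allMem_one_sub_shiftOp_pow (J : Ideal (FreeDiffAlg k X))
    (σ : ℤ × ℤ × ℤ → ℤ × ℤ × ℤ) (e : ℕ)
    {g : (ℤ × ℤ × ℤ) → FreeDiffAlg k X} (h : ∀ v, g v ∈ J) :
    ∀ v, ((1 - shiftOp k X σ) ^ e) g v ∈ J := by
  intro v
  rw [one_sub_shiftOp_pow_apply]
  refine Submodule.sum_mem _ fun t _ => ?_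
  rw [MvPolynomial.smul_eq_C_mul]
  exact J.mul_mem_left _ (h _)

def sigD : ℤ × ℤ × ℤ → ℤ × ℤ × ℤ := fun v => (v.1 - 1, v.2.1 + 1, v.2.2)
def sigE : ℤ × ℤ × ℤ → ℤ × ℤ × ℤ := fun v => (v.1 - 1, v.2.1, v.2.2 + 1)
def sigF : ℤ × ℤ × ℤ → ℤ × ℤ × ℤ := fun v => (v.1, v.2.1 - 1, v.2.2 + 1)

lemma sigD_iterate (t : ℕ) (v : ℤ × ℤ × ℤ) :
    sigD^[t] v = (v.1 - t, v.2.1 + t, v.2.2) := by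
  induction t generalizing v with
  | zero => simp
  | succ t ih =>
    rw [Function.iterate_succ_apply, ih]
    simp only [sigD, Prod.mk.injEq]
    refine ⟨by push_cast; ring, by push_cast; ring, trivial⟩

lemma sigE_iterate (t : ℕ) (v : ℤ × ℤ × ℤ) :
    sigE^[t] v = (v.1 - t, v.2.1, v.2.2 + t) := by
  induction t generalizing v with
  | zero => simp
  | succ t ih =>
    rw [Function.iterate_succ_apply, ih]
    simp only [sigE, Prod.mk.injEq]
    refine ⟨by push_cast; ring, trivial, by push_cast; ring⟩

lemma sigF_iterate (t : ℕ) (v : ℤ × ℤ × ℤ) :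
    sigF^[t] v = (v.1, v.2.1 - t, v.2.2 + t) := by
  induction t generalizing v with
  | zero => simp
  | succ t ih =>
    rw [Function.iterate_succ_apply, ih]
    simp only [sigF, Prod.mk.injEq]
    refine ⟨trivial, by push_cast; ring, by push_cast; ring⟩


/-! ### helpers -/

lemma mul_fpq_expand (c : FreeDiffAlg k X) (a b : X) (p q : ℕ) (n m : ℤ) (L : ℕ) :
    c * fpq k a b p q n m L
      = ∑ t ∈ Finset.range (L + 1), ((-1 : k) ^ t * (L.choose t : k)) •
          (c * (MvPolynomial.X (a, p, n - (t : ℤ)) * MvPolynomial.X (b, q, m + (t : ℤ)))) := by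
  unfold fpq
  rw [Finset.mul_sum]
  exact Finset.sum_congr rfl fun t _ => mul_smul_comm _ _ _

lemma fpq_mul_expand (c : FreeDiffAlg k X) (a b : X) (p q : ℕ) (n m : ℤ) (L : ℕ) :
    fpq k a b p q n m L * c
      = ∑ t ∈ Finset.range (L + 1), ((-1 : k) ^ t * (L.choose t : k)) •
          (MvPolynomial.X (a, p, n - (t : ℤ)) * MvPolynomial.X (b, q, m + (t : ℤ)) * c) := by
  unfold fpq
  rw [Finset.sum_mul]
  exact Finset.sum_congr rfl fun t _ => smul_mul_assoc _ _ _

lemma sum_smul_comm' {R M : Type*} [CommRing R] [AddCommGroup M] [Module R M]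
    (c d : ℕ → R) (e₁ e₂ : ℕ) (Φ : ℕ → ℕ → M) :
    ∑ t ∈ Finset.range e₁, c t • ∑ s ∈ Finset.range e₂, d s • Φ t s
      = ∑ s ∈ Finset.range e₂, d s • ∑ t ∈ Finset.range e₁, c t • Φ t s := by
  simp_rw [Finset.smul_sum, smul_smul]
  rw [Finset.sum_comm]
  exact Finset.sum_congr rfl fun s _ => Finset.sum_congr rfl fun t _ => by rw [mul_comm]

lemma gen0_mem (N : X × X → ℕ) (c e : X) (n m : ℤ) :
    fpq k c e 1 0 n m (N (c, e)) ∈ idealI k N := by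
  have h := gen_mem (k := k) N c e n m 0
  rwa [Function.iterate_zero, id_eq] at h

lemma gen01_mem (N : X × X → ℕ) (c e : X) (n m : ℤ) :
    fpq k c e 0 1 n m (N (e, c)) ∈ idealI k N := by
  rw [fpq_swap]
  rw [MvPolynomial.smul_eq_C_mul]
  exact Ideal.mul_mem_left _ _ (gen0_mem N e c _ _)

lemma S2_mem (N : X × X → ℕ) (c e : X) (n m : ℤ) :
    fpq k c e 2 0 n m (N (c, e)) + fpq k c e 1 1 n m (N (c, e)) ∈ idealI k N := by
  have h := gen_mem (k := k) N c e n m 1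
  rw [Function.iterate_one, d_fpq] at h
  norm_num at h
  exact h

/-- the base family -/
def Bfun (k : Type*) {X : Type*} [CommRing k] (a x y : X) :
    (ℤ × ℤ × ℤ) → FreeDiffAlg k X := fun v =>
  MvPolynomial.X (a, 2, v.1) * (MvPolynomial.X (x, 0, v.2.1) * MvPolynomial.X (y, 0, v.2.2))

lemma bridgeF (a x y : X) (L : ℕ) (v : ℤ × ℤ × ℤ) :
    ((1 - shiftOp k X sigF) ^ L) (Bfun k a x y) v
      = MvPolynomial.X (a, 2, v.1) * fpq k x y 0 0 v.2.1 v.2.2 L := by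
  rw [one_sub_shiftOp_pow_apply, mul_fpq_expand]
  refine Finset.sum_congr rfl fun t _ => ?_
  rw [sigF_iterate]
  rfl


/-- key fact 1: `(z₀-z)^{N(a,x)} (z-w)^{N(x,y)} a₂(z₀)x₀(z)y₀(w) ≡ 0 mod I` -/
lemma fact1 (N : X × X → ℕ) (a x y : X) (kk nn mm : ℤ) :
    ∑ t ∈ Finset.range (N (a, x) + 1), ((-1 : k) ^ t * ((N (a, x)).choose t : k)) •
      (MvPolynomial.X (a, 2, kk - (t : ℤ)) * fpq k x y 0 0 (nn + (t : ℤ)) mm (N (x, y)))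
      ∈ idealI k N := by
  set N₁ := N (a, x) with hN₁
  set N₃ := N (x, y) with hN₃
  have polli :
      ∑ s ∈ Finset.range (N₃ + 1), ((-1 : k) ^ s * (N₃.choose s : k)) •
        (fpq k a x 1 1 kk (nn - (s : ℤ)) N₁ * MvPolynomial.X (y, 0, mm + (s : ℤ)))
      = ∑ t ∈ Finset.range (N₁ + 1), ((-1 : k) ^ t * (N₁.choose t : k)) •
        (MvPolynomial.X (a, 1, kk - (t : ℤ)) * fpq k x y 1 0 (nn + (t : ℤ)) mm N₃) := by
    simp_rw [fpq_mul_expand, mul_fpq_expand, Finset.smul_sum, MvPolynomial.smul_eq_C_mul]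
    rw [Finset.sum_comm]
    refine Finset.sum_congr rfl fun t _ => Finset.sum_congr rfl fun s _ => ?_
    rw [show nn - (s : ℤ) + (t : ℤ) = nn + (t : ℤ) - (s : ℤ) from by ring]
    ring
  have hLHS :
      ∑ t ∈ Finset.range (N₁ + 1), ((-1 : k) ^ t * (N₁.choose t : k)) •
        (MvPolynomial.X (a, 2, kk - (t : ℤ)) * fpq k x y 0 0 (nn + (t : ℤ)) mm N₃)
      = ∑ s ∈ Finset.range (N₃ + 1), ((-1 : k) ^ s * (N₃.choose s : k)) •
          (fpq k a x 2 0 kk (nn - (s : ℤ)) N₁ * MvPolynomial.X (y, 0, mm + (s : ℤ))) := by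
    simp_rw [fpq_mul_expand, mul_fpq_expand, Finset.smul_sum, MvPolynomial.smul_eq_C_mul]
    rw [Finset.sum_comm]
    refine Finset.sum_congr rfl fun s _ => Finset.sum_congr rfl fun t _ => ?_
    rw [show nn - (s : ℤ) + (t : ℤ) = nn + (t : ℤ) - (s : ℤ) from by ring]
    ring
  have key :
      ∑ t ∈ Finset.range (N₁ + 1), ((-1 : k) ^ t * (N₁.choose t : k)) •
        (MvPolynomial.X (a, 2, kk - (t : ℤ)) * fpq k x y 0 0 (nn + (t : ℤ)) mm N₃)
      = ∑ s ∈ Finset.range (N₃ + 1), ((-1 : k) ^ s * (N₃.choose s : k)) •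
          ((fpq k a x 2 0 kk (nn - (s : ℤ)) N₁ + fpq k a x 1 1 kk (nn - (s : ℤ)) N₁)
            * MvPolynomial.X (y, 0, mm + (s : ℤ)))
        - ∑ t ∈ Finset.range (N₁ + 1), ((-1 : k) ^ t * (N₁.choose t : k)) •
          (MvPolynomial.X (a, 1, kk - (t : ℤ)) * fpq k x y 1 0 (nn + (t : ℤ)) mm N₃) := by
    rw [hLHS, ← polli, eq_sub_iff_add_eq, ← Finset.sum_add_distrib]
    refine Finset.sum_congr rfl fun s _ => ?_
    rw [← smul_add, ← add_mul]
  rw [key]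
  refine sub_mem (Submodule.sum_mem _ fun s _ => ?_) (Submodule.sum_mem _ fun t _ => ?_)
  · rw [MvPolynomial.smul_eq_C_mul]
    exact Ideal.mul_mem_left _ _ (Ideal.mul_mem_right _ _ (S2_mem N a x kk _))
  · rw [MvPolynomial.smul_eq_C_mul]
    exact Ideal.mul_mem_left _ _ (Ideal.mul_mem_left _ _ (gen0_mem N x y _ _))

/-- key fact 2: `(z₀-w)^{N(a,y)} (z-w)^{N(y,x)} a₂(z₀)x₀(z)y₀(w) ≡ 0 mod I` -/
lemma fact2 (N : X × X → ℕ) (a x y : X) (kk nn mm : ℤ) :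
    ∑ t ∈ Finset.range (N (a, y) + 1), ((-1 : k) ^ t * ((N (a, y)).choose t : k)) •
      (MvPolynomial.X (a, 2, kk - (t : ℤ)) * fpq k x y 0 0 nn (mm + (t : ℤ)) (N (y, x)))
      ∈ idealI k N := by
  set N₂ := N (a, y) with hN₂
  set N₄ := N (y, x) with hN₄
  have polli :
      ∑ s ∈ Finset.range (N₄ + 1), ((-1 : k) ^ s * (N₄.choose s : k)) •
        (fpq k a y 1 1 kk (mm + (s : ℤ)) N₂ * MvPolynomial.X (x, 0, nn - (s : ℤ)))
      = ∑ t ∈ Finset.range (N₂ + 1), ((-1 : k) ^ t * (N₂.choose t : k)) •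
        (MvPolynomial.X (a, 1, kk - (t : ℤ)) * fpq k x y 0 1 nn (mm + (t : ℤ)) N₄) := by
    simp_rw [fpq_mul_expand, mul_fpq_expand, Finset.smul_sum, MvPolynomial.smul_eq_C_mul]
    rw [Finset.sum_comm]
    refine Finset.sum_congr rfl fun t _ => Finset.sum_congr rfl fun s _ => ?_
    rw [show mm + (s : ℤ) + (t : ℤ) = mm + (t : ℤ) + (s : ℤ) from by ring]
    ring
  have hLHS :
      ∑ t ∈ Finset.range (N₂ + 1), ((-1 : k) ^ t * (N₂.choose t : k)) •
        (MvPolynomial.X (a, 2, kk - (t : ℤ)) * fpq k x y 0 0 nn (mm + (t : ℤ)) N₄)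
      = ∑ s ∈ Finset.range (N₄ + 1), ((-1 : k) ^ s * (N₄.choose s : k)) •
          (fpq k a y 2 0 kk (mm + (s : ℤ)) N₂ * MvPolynomial.X (x, 0, nn - (s : ℤ))) := by
    simp_rw [fpq_mul_expand, mul_fpq_expand, Finset.smul_sum, MvPolynomial.smul_eq_C_mul]
    rw [Finset.sum_comm]
    refine Finset.sum_congr rfl fun s _ => Finset.sum_congr rfl fun t _ => ?_
    rw [show mm + (s : ℤ) + (t : ℤ) = mm + (t : ℤ) + (s : ℤ) from by ring]
    ring
  have key :
      ∑ t ∈ Finset.range (N₂ + 1), ((-1 : k) ^ t * (N₂.choose t : k)) •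
        (MvPolynomial.X (a, 2, kk - (t : ℤ)) * fpq k x y 0 0 nn (mm + (t : ℤ)) N₄)
      = ∑ s ∈ Finset.range (N₄ + 1), ((-1 : k) ^ s * (N₄.choose s : k)) •
          ((fpq k a y 2 0 kk (mm + (s : ℤ)) N₂ + fpq k a y 1 1 kk (mm + (s : ℤ)) N₂)
            * MvPolynomial.X (x, 0, nn - (s : ℤ)))
        - ∑ t ∈ Finset.range (N₂ + 1), ((-1 : k) ^ t * (N₂.choose t : k)) •
          (MvPolynomial.X (a, 1, kk - (t : ℤ)) * fpq k x y 0 1 nn (mm + (t : ℤ)) N₄) := by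
    rw [hLHS, ← polli, eq_sub_iff_add_eq, ← Finset.sum_add_distrib]
    refine Finset.sum_congr rfl fun s _ => ?_
    rw [← smul_add, ← add_mul]
  rw [key]
  refine sub_mem (Submodule.sum_mem _ fun s _ => ?_) (Submodule.sum_mem _ fun t _ => ?_)
  · rw [MvPolynomial.smul_eq_C_mul]
    exact Ideal.mul_mem_left _ _ (Ideal.mul_mem_right _ _ (S2_mem N a y kk _))
  · rw [MvPolynomial.smul_eq_C_mul]
    exact Ideal.mul_mem_left _ _ (Ideal.mul_mem_left _ _ (gen01_mem N x y _ _))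


/-! ### commutation lemmas and the main assembly -/

lemma shiftOp_commute (σ τ : ℤ × ℤ × ℤ → ℤ × ℤ × ℤ) (h : σ ∘ τ = τ ∘ σ) :
    Commute (shiftOp k X σ) (shiftOp k X τ) := by
  unfold Commute SemiconjBy
  rw [shiftOp_mul, shiftOp_mul, h]

lemma one_sub_commute {A : Type*} [Ring A] {a b : A} (h : Commute a b) :
    Commute (1 - a) (1 - b) :=
  Commute.sub_left (Commute.one_left (1 - b))
    (Commute.sub_right (Commute.one_right a) h)

lemma sig_comm_FD : sigF ∘ sigD = sigD ∘ sigF := by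
  funext v
  simp only [Function.comp_apply, sigD, sigF]
  all_goals refine Prod.ext ?_ (Prod.ext ?_ ?_) <;> simp <;> ring

lemma sig_comm_ED : sigE ∘ sigD = sigD ∘ sigE := by
  funext v
  simp only [Function.comp_apply, sigD, sigE]
  all_goals refine Prod.ext ?_ (Prod.ext ?_ ?_) <;> simp <;> ring

lemma sig_comm_FE : sigF ∘ sigE = sigE ∘ sigF := by
  funext v
  simp only [Function.comp_apply, sigE, sigF]
  all_goals refine Prod.ext ?_ (Prod.ext ?_ ?_) <;> simp <;> ring

lemma sigE_decomp : sigF ∘ sigD = sigE := by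
  funext v
  simp only [Function.comp_apply, sigD, sigF, sigE]
  all_goals refine Prod.ext ?_ (Prod.ext ?_ ?_) <;> simp <;> ring

lemma neg_pow_zsmul {A : Type*} [Ring A] (a : A) (j : ℕ) :
    (-a) ^ j = ((-1 : ℤ) ^ j) • a ^ j := by
  induction j with
  | zero => simp
  | succ j ih =>
    rw [pow_succ, pow_succ, ih, smul_mul_assoc, mul_neg, pow_succ, mul_smul,
      neg_one_zsmul, smul_neg]

lemma opFact1 (N : X × X → ℕ) (a x y : X) :
    ∀ v, (((1 - shiftOp k X sigD) ^ (N (a, x))) * ((1 - shiftOp k X sigF) ^ (N (x, y))))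
      (Bfun k a x y) v ∈ idealI k N := by
  intro v
  rw [Module.End.mul_apply, one_sub_shiftOp_pow_apply]
  have hterm : ∀ t : ℕ,
      ((1 - shiftOp k X sigF) ^ (N (x, y))) (Bfun k a x y) (sigD^[t] v)
        = MvPolynomial.X (a, 2, v.1 - (t : ℤ)) *
            fpq k x y 0 0 (v.2.1 + (t : ℤ)) v.2.2 (N (x, y)) := fun t => by
    rw [sigD_iterate, bridgeF]
  simp_rw [hterm]
  exact fact1 N a x y v.1 v.2.1 v.2.2

lemma opFact2 (N : X × X → ℕ) (a x y : X) :
    ∀ v, (((1 - shiftOp k X sigE) ^ (N (a, y))) * ((1 - shiftOp k X sigF) ^ (N (y, x))))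
      (Bfun k a x y) v ∈ idealI k N := by
  intro v
  rw [Module.End.mul_apply, one_sub_shiftOp_pow_apply]
  have hterm : ∀ t : ℕ,
      ((1 - shiftOp k X sigF) ^ (N (y, x))) (Bfun k a x y) (sigE^[t] v)
        = MvPolynomial.X (a, 2, v.1 - (t : ℤ)) *
            fpq k x y 0 0 v.2.1 (v.2.2 + (t : ℤ)) (N (y, x)) := fun t => by
    rw [sigE_iterate, bridgeF]
  simp_rw [hterm]
  exact fact2 N a x y v.1 v.2.1 v.2.2

/-- the case `r = 2` -/
lemma case_r2 (N : X × X → ℕ) (M : ℕ) (hM : ∀ c e : X, N (c, e) ≤ M)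
    (a x y : X) (k₀ n m : ℤ) :
    MvPolynomial.X (a, 2, k₀) * fpq k x y 0 0 n m (3 * M) ∈ idealI k N := by
  set N₁ := N (a, x) with hN₁
  set N₂ := N (a, y) with hN₂
  set D : Module.End k ((ℤ × ℤ × ℤ) → FreeDiffAlg k X)
    := 1 - shiftOp k X sigD with hD
  set E : Module.End k ((ℤ × ℤ × ℤ) → FreeDiffAlg k X)
    := 1 - shiftOp k X sigE with hE
  set Ff : Module.End k ((ℤ × ℤ × ℤ) → FreeDiffAlg k X)
    := 1 - shiftOp k X sigF with hFf
  set B := Bfun k a x y with hB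
  have hcSDSF : Commute (shiftOp k X sigD) (shiftOp k X sigF) :=
    shiftOp_commute _ _ sig_comm_FD.symm
  have hcDF : Commute D Ff := one_sub_commute hcSDSF
  have hcDE : Commute D E := one_sub_commute (shiftOp_commute _ _ sig_comm_ED.symm)
  have hcEF : Commute E Ff := one_sub_commute (shiftOp_commute _ _ sig_comm_FE.symm)
  have hm1 : N₁ ≤ M := hM a x
  have hm2 : N₂ ≤ M := hM a y
  have hm3 : N (x, y) ≤ M := hM x y
  have hm4 : N (y, x) ≤ M := hM y x
  -- fact 1, lifted to order M
  have fact1M : ∀ v, ((D ^ N₁) ((Ff ^ M) B)) v ∈ idealI k N := by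
    intro v
    have h2 : M = (M - N (x, y)) + N (x, y) := (Nat.sub_add_cancel hm3).symm
    have hEnd : D ^ N₁ * Ff ^ M
        = Ff ^ (M - N (x, y)) * (D ^ N₁ * Ff ^ (N (x, y))) := by
      conv_lhs => rw [h2, pow_add]
      rw [← mul_assoc, (hcDF.pow_pow N₁ (M - N (x, y))).eq, mul_assoc]
    have hg : (D ^ N₁) ((Ff ^ M) B)
        = (Ff ^ (M - N (x, y))) ((D ^ N₁ * Ff ^ (N (x, y))) B) := by
      rw [← Module.End.mul_apply, hEnd, Module.End.mul_apply]
    rw [hg]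
    exact allMem_one_sub_shiftOp_pow _ sigF (M - N (x, y)) (opFact1 N a x y) v
  -- fact 2, lifted to order M
  have fact2M : ∀ v, ((E ^ N₂) ((Ff ^ M) B)) v ∈ idealI k N := by
    intro v
    have h2 : M = (M - N (y, x)) + N (y, x) := (Nat.sub_add_cancel hm4).symm
    have hEnd : E ^ N₂ * Ff ^ M
        = Ff ^ (M - N (y, x)) * (E ^ N₂ * Ff ^ (N (y, x))) := by
      conv_lhs => rw [h2, pow_add]
      rw [← mul_assoc, (hcEF.pow_pow N₂ (M - N (y, x))).eq, mul_assoc]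
    have hg : (E ^ N₂) ((Ff ^ M) B)
        = (Ff ^ (M - N (y, x))) ((E ^ N₂ * Ff ^ (N (y, x))) B) := by
      rw [← Module.End.mul_apply, hEnd, Module.End.mul_apply]
    rw [hg]
    exact allMem_one_sub_shiftOp_pow _ sigF (M - N (y, x)) (opFact2 N a x y) v
  rcases Nat.eq_zero_or_pos (N₁ + N₂) with h0 | hpos
  · -- both locality orders vanish
    have hN1z : N₁ = 0 := by omega
    have hF : ∀ v, ((Ff ^ M) B) v ∈ idealI k N := by
      intro v
      have h := fact1M v
      rwa [hN1z, pow_zero, Module.End.one_apply] at h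
    have h3 : ∀ v, ((Ff ^ (3 * M)) B) v ∈ idealI k N := by
      intro v
      have hg : (Ff ^ (3 * M)) B = (Ff ^ (2 * M)) ((Ff ^ M) B) := by
        rw [show 3 * M = 2 * M + M from by ring, pow_add, Module.End.mul_apply]
      rw [hg]
      exact allMem_one_sub_shiftOp_pow _ sigF (2 * M) hF v
    have h := h3 (k₀, n, m)
    rwa [bridgeF] at h
  · set S := N₁ + N₂ - 1 with hS
    have hED : Commute E (-D) := hcDE.symm.neg_right
    have hexp := hED.add_pow S
    rw [← sub_eq_add_neg] at hexp
    have hse : shiftOp k X sigE = shiftOp k X sigD * shiftOp k X sigF := by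
      rw [shiftOp_mul, sigE_decomp]
    have hkey : E - D = shiftOp k X sigD * Ff := by
      rw [hE, hD, hFf, hse, mul_sub, mul_one]
      abel
    have hSDF : Commute (shiftOp k X sigD) Ff :=
      Commute.sub_right (Commute.one_right _) hcSDSF
    have hmain : ∀ v, (((shiftOp k X sigD) ^ S * Ff ^ (S + M)) B) v ∈ idealI k N := by
      intro v
      have hEndEq : (shiftOp k X sigD) ^ S * Ff ^ (S + M) = (E - D) ^ S * Ff ^ M := by
        rw [pow_add, ← mul_assoc, ← hSDF.mul_pow S, ← hkey]
      rw [hEndEq, hexp, Finset.sum_mul, LinearMap.sum_apply, Finset.sum_apply]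
      refine Submodule.sum_mem _ fun i hi => ?_
      rw [Finset.mem_range] at hi
      have hterm : (E ^ i * (-D) ^ (S - i) * (↑(S.choose i) : Module.End k ((ℤ × ℤ × ℤ) → FreeDiffAlg k X)) * Ff ^ M) B v
          = ((-1 : ℤ) ^ (S - i) * (S.choose i : ℤ)) •
              ((E ^ i) ((D ^ (S - i)) ((Ff ^ M) B)) v) := by
        rw [neg_pow_zsmul D (S - i), mul_smul_comm, smul_mul_assoc, smul_mul_assoc,
          mul_assoc (E ^ i * D ^ (S - i)), ← nsmul_eq_mul, mul_smul_comm,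
          ← natCast_zsmul, smul_smul, LinearMap.smul_apply, Pi.smul_apply,
          Module.End.mul_apply, Module.End.mul_apply]
      rw [hterm]
      refine zsmul_mem ?_ _
      by_cases hcase : N₁ ≤ S - i
      · have hg : (E ^ i) ((D ^ (S - i)) ((Ff ^ M) B))
            = (E ^ i) ((D ^ (S - i - N₁)) ((D ^ N₁) ((Ff ^ M) B))) := by
          rw [← Module.End.mul_apply (D ^ (S - i - N₁)), ← pow_add,
            Nat.sub_add_cancel hcase]
        rw [hg]
        exact allMem_one_sub_shiftOp_pow _ sigE i
          (allMem_one_sub_shiftOp_pow _ sigD (S - i - N₁) fact1M) v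
      · have hi2 : N₂ ≤ i := by omega
        have hg : (E ^ i) ((D ^ (S - i)) ((Ff ^ M) B))
            = (D ^ (S - i)) ((E ^ (i - N₂)) ((E ^ N₂) ((Ff ^ M) B))) := by
          rw [← Module.End.mul_apply (E ^ (i - N₂)), ← pow_add,
            Nat.sub_add_cancel hi2, ← Module.End.mul_apply, ← Module.End.mul_apply,
            (hcDE.symm.pow_pow i (S - i)).eq, Module.End.mul_apply, Module.End.mul_apply]
        rw [hg]
        exact allMem_one_sub_shiftOp_pow _ sigD (S - i)
          (allMem_one_sub_shiftOp_pow _ sigE (i - N₂) fact2M) v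
    have hFSM : ∀ v, ((Ff ^ (S + M)) B) v ∈ idealI k N := by
      rintro ⟨kk, nn, mm⟩
      have h := hmain (kk + S, nn - S, mm)
      rw [Module.End.mul_apply, shiftOp_pow, shiftOp_apply, sigD_iterate] at h
      rw [show kk + (S : ℤ) - (S : ℤ) = kk from by ring,
        show nn - (S : ℤ) + (S : ℤ) = nn from by ring] at h
      exact h
    have hSM : S + M ≤ 3 * M := by omega
    have h3 : ∀ v, ((Ff ^ (3 * M)) B) v ∈ idealI k N := by
      intro v
      have hg : (Ff ^ (3 * M)) B = (Ff ^ (3 * M - (S + M))) ((Ff ^ (S + M)) B) := by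
        rw [← Module.End.mul_apply, ← pow_add, Nat.sub_add_cancel hSM]
      rw [hg]
      exact allMem_one_sub_shiftOp_pow _ sigF _ hFSM v
    have h := h3 (k₀, n, m)
    rwa [bridgeF] at h

end Work

namespace Work

variable {k X : Type*} [CommRing k]

lemma fpq10_mem (N : X × X → ℕ) (x y : X) {L : ℕ} (hL : N (x, y) ≤ L) (n m : ℤ) :
    fpq k x y 1 0 n m L ∈ idealI k N := by
  have h := fpq_mul_mem_mono (idealI k N) 1 x y 1 0
    (fun n m => by rw [one_mul]; exact gen0_mem N x y n m) L hL n m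
  rwa [one_mul] at h

lemma fpq01_mem (N : X × X → ℕ) (x y : X) {L : ℕ} (hL : N (y, x) ≤ L) (n m : ℤ) :
    fpq k x y 0 1 n m L ∈ idealI k N := by
  have h := fpq_mul_mem_mono (idealI k N) 1 x y 0 1
    (fun n m => by rw [one_mul]; exact gen01_mem N x y n m) L hL n m
  rwa [one_mul] at h

end Work

/-- `a^(r)(k₀) · f^{0,0}_{x,y}(n, m; 3M) ∈ I(N)` for `r ≥ 2`. -/
theorem var_mul_fpq_zero_zero_mem_idealI
    (k X : Type*) [Field k] [CharZero k] [Nonempty X]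
    (N : X × X → ℕ) (M : ℕ) (hM : ∀ a b : X, N (a, b) ≤ M)
    (a x y : X) (r : ℕ) (hr : 2 ≤ r) (k₀ n m : ℤ) :
    MvPolynomial.X (a, r, k₀) * fpq k x y 0 0 n m (3 * M) ∈ idealI k N := by
  induction r, hr using Nat.le_induction with
  | base => exact Work.case_r2 N M (fun c e => hM c e) a x y k₀ n m
  | succ r hr ih =>
    have hm3 : N (x, y) ≤ 3 * M := le_trans (hM x y) (by omega)
    have hm4 : N (y, x) ≤ 3 * M := le_trans (hM y x) (by omega)
    have h2 : MvPolynomial.X (a, r, k₀) *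
        (fpq k x y 1 0 n m (3 * M) + fpq k x y 0 1 n m (3 * M)) ∈ idealI k N :=
      Ideal.mul_mem_left _ _
        (add_mem (Work.fpq10_mem N x y hm3 n m) (Work.fpq01_mem N x y hm4 n m))
    have key : MvPolynomial.X (a, r + 1, k₀) * fpq k x y 0 0 n m (3 * M)
        = derD k X (MvPolynomial.X (a, r, k₀) * fpq k x y 0 0 n m (3 * M))
          - MvPolynomial.X (a, r, k₀) *
              (fpq k x y 1 0 n m (3 * M) + fpq k x y 0 1 n m (3 * M)) := by
      rw [Derivation.leibniz, Work.d_fpq, Work.derD_X', smul_eq_mul, smul_eq_mul]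
      ring
    rw [key]
    exact sub_mem (Work.derD_mem N ih) h2

end
end
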